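/- Let K and L be essentially small tt-categories with K rigid, let F : K → L be a tt-functor and let P ∈ Spc(K) be a prime. Then the tt-ideal of L generated by the class F(P) = {F(x) : x ∈ P} admits the following description: ⟨F(P)⟩ = {y ∈ L : there exists x ∈ P such that y ∈ ⟨F(x)⟩}. -/

import Mathlib

/-!
Basic notions of tensor-triangular geometry (Balmer), formalized from scratch:
tt-categories (pretriangulated + monoidal, with tensor exact in each variable),
tt-ideals, prime tt-ideals, the Balmer spectrum `Spc` with its topology,
tensor powers of objects and morphisms, rigidity.
-/

open CategoryTheory Category Limits ZeroObject Pretriangulated MonoidalCategory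

universe v u v' u'

namespace TT

variable (K : Type u) [Category.{v} K] [HasZeroObject K] [Preadditive K]
  [HasShift K ℤ] [∀ n : ℤ, (shiftFunctor K n).Additive] [Pretriangulated K]
  [MonoidalCategory K]

/-- The tensor is exact (triangulated) in each variable: tensoring a distinguished
triangle with an object (on either side) again yields a distinguished triangle. -/
def TensorExact : Prop :=
  ∀ (x : K) (T : Triangle K), (T ∈ distTriang K) →
    (∃ h : x ⊗ T.obj₃ ⟶ (x ⊗ T.obj₁)⟦(1:ℤ)⟧,
      Triangle.mk (x ◁ T.mor₁) (x ◁ T.mor₂) h ∈ distTriang K) ∧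
    (∃ h : T.obj₃ ⊗ x ⟶ (T.obj₁ ⊗ x)⟦(1:ℤ)⟧,
      Triangle.mk (T.mor₁ ▷ x) (T.mor₂ ▷ x) h ∈ distTriang K)

/-- Rigidity: every object `x` has a dual `x^∨`, i.e. takes part in an exact pairing
(coevaluation `η : 𝟙 ⟶ x^∨ ⊗ x` and evaluation `ε : x ⊗ x^∨ ⟶ 𝟙` satisfying the
triangle identities, which yield the adjunction `x ⊗ - ⊣ x^∨ ⊗ -`). -/
def Rigid : Prop := ∀ x : K, ∃ xd : K, Nonempty (ExactPairing xd x)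

variable {K}

/-- A tt-ideal: a (full, replete) class of objects closed under shifts, cones,
direct summands (retracts) and tensoring with arbitrary objects. -/
structure IsTTIdeal (I : Set K) : Prop where
  zero_mem : (0 : K) ∈ I
  shift_mem : ∀ (n : ℤ), ∀ x ∈ I, (x⟦n⟧ : K) ∈ I
  cone_mem : ∀ T : Triangle K, (T ∈ distTriang K) → T.obj₁ ∈ I → T.obj₂ ∈ I → T.obj₃ ∈ I
  retract_mem : ∀ x z : K, z ∈ I → ∀ (i : x ⟶ z) (r : z ⟶ x), i ≫ r = 𝟙 x → x ∈ I
  tensor_mem : ∀ x ∈ I, ∀ y : K, x ⊗ y ∈ I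
  tensor_mem' : ∀ x ∈ I, ∀ y : K, y ⊗ x ∈ I

/-- A prime tt-ideal: a proper tt-ideal `P` such that `x ⊗ y ∈ P` implies
`x ∈ P` or `y ∈ P`. -/
structure IsPrimeTTIdeal (P : Set K) extends IsTTIdeal P : Prop where
  ne_univ : P ≠ Set.univ
  mem_or_mem : ∀ x y : K, x ⊗ y ∈ P → x ∈ P ∨ y ∈ P

variable (K) in
/-- The Balmer spectrum: the set of prime tt-ideals. -/
def Spc := {P : Set K // IsPrimeTTIdeal P}

/-- The Balmer topology on `Spc K`, generated by the basic open subsets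
`U(x) = {P ∈ Spc K | x ∈ P}`. -/
instance : TopologicalSpace (Spc K) :=
  TopologicalSpace.generateFrom {U | ∃ x : K, U = {P : Spc K | x ∈ P.1}}

/-- The tt-ideal `⟨E⟩` generated by a class of objects `E`. -/
def ttIdealGen (E : Set K) : Set K := ⋂₀ {I : Set K | IsTTIdeal I ∧ E ⊆ I}

/-- `n`-fold tensor power of an object (`x^⊗0 = 𝟙`). -/
def opow (x : K) : ℕ → K
  | 0 => 𝟙_ K
  | n + 1 => opow x n ⊗ x

/-- `n`-fold tensor power `f^⊗n` of a morphism. -/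
def mpow {x y : K} (f : x ⟶ y) : ∀ n : ℕ, (opow x n ⟶ opow y n)
  | 0 => 𝟙 _
  | n + 1 => mpow f n ⊗ₘ f

end TT

open TT

variable {K : Type u} [Category.{v} K] [HasZeroObject K] [Preadditive K]
  [HasShift K ℤ] [∀ n : ℤ, (shiftFunctor K n).Additive] [Pretriangulated K]
  [MonoidalCategory K] [SymmetricCategory K] [EssentiallySmall.{v} K]
variable {L : Type u'} [Category.{v'} L] [HasZeroObject L] [Preadditive L]
  [HasShift L ℤ] [∀ n : ℤ, (shiftFunctor L n).Additive] [Pretriangulated L]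
  [MonoidalCategory L] [SymmetricCategory L] [EssentiallySmall.{v'} L]


section Aux

variable {C : Type*} [Category C] [HasZeroObject C] [Preadditive C]
  [HasShift C ℤ] [∀ n : ℤ, (shiftFunctor C n).Additive] [Pretriangulated C]
  [MonoidalCategory C]

theorem isTTIdeal_ttIdealGen (E : Set C) : IsTTIdeal (ttIdealGen E) := by
  constructor
  · exact fun I hI => hI.1.zero_mem
  · exact fun n x hx I hI => hI.1.shift_mem n x (hx I hI)
  · exact fun T hT h1 h2 I hI => hI.1.cone_mem T hT (h1 I hI) (h2 I hI)
  · exact fun x z hz i r hir I hI => hI.1.retract_mem x z (hz I hI) i r hir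
  · exact fun x hx y I hI => hI.1.tensor_mem x (hx I hI) y
  · exact fun x hx y I hI => hI.1.tensor_mem' x (hx I hI) y

theorem subset_ttIdealGen (E : Set C) : E ⊆ ttIdealGen E :=
  fun x hx I hI => hI.2 hx

theorem ttIdealGen_le {E I : Set C} (hI : IsTTIdeal I) (hE : E ⊆ I) :
    ttIdealGen E ⊆ I := fun _ hx => hx I ⟨hI, hE⟩

theorem IsTTIdeal.biprod_mem {I : Set C} (hI : IsTTIdeal I) {x y : C}
    (hx : x ∈ I) (hy : y ∈ I) : (x ⊞ y : C) ∈ I := by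
  refine hI.cone_mem (Triangle.invRotate (binaryBiproductTriangle x y))
    (inv_rot_of_distTriang _ (binaryBiproductTriangle_distinguished x y)) ?_ hx
  exact hI.shift_mem (-1) y hy

end Aux

theorem mem_ttIdealGen_singleton_of_retract {C : Type*} [Category C] [HasZeroObject C]
    [Preadditive C] [HasShift C ℤ] [∀ n : ℤ, (shiftFunctor C n).Additive]
    [Pretriangulated C] [MonoidalCategory C] {x z : C} (i : x ⟶ z) (r : z ⟶ x)
    (hir : i ≫ r = 𝟙 x) : x ∈ ttIdealGen ({z} : Set C) :=
  (isTTIdeal_ttIdealGen _).retract_mem x z (subset_ttIdealGen _ rfl) i r hir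

/-- **Lemma (Balmer).** Let `K`, `L` be essentially small tt-categories with `K` rigid,
`F : K ⥤ L` a tt-functor and `P ∈ Spc K` a prime. Then the tt-ideal of `L` generated by
`F(P) = {F(x) | x ∈ P}` is `⟨F(P)⟩ = {y ∈ L | ∃ x ∈ P, y ∈ ⟨F(x)⟩}`. -/
theorem ttIdealGen_image_of_prime
    (hK : TensorExact K) (hL : TensorExact L) (hrigid : Rigid K)
    (F : K ⥤ L) [F.CommShift ℤ] [F.IsTriangulated] [F.Monoidal]
    (P : Spc K) :
    ttIdealGen (F.obj '' P.1) = {y : L | ∃ x ∈ P.1, y ∈ ttIdealGen {F.obj x}} := by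
  have hP : IsTTIdeal P.1 := P.2.toIsTTIdeal
  -- each singleton-generated ideal with generator from the image is inside the LHS
  have key : ∀ x ∈ P.1, ttIdealGen ({F.obj x} : Set L) ⊆ ttIdealGen (F.obj '' P.1) := by
    intro x hx
    refine ttIdealGen_le (isTTIdeal_ttIdealGen _) ?_
    rintro _ rfl
    exact subset_ttIdealGen _ ⟨x, hx, rfl⟩
  -- the RHS is a tt-ideal
  have hRHS : IsTTIdeal {y : L | ∃ x ∈ P.1, y ∈ ttIdealGen {F.obj x}} := by
    constructor
    · exact ⟨0, hP.zero_mem, (isTTIdeal_ttIdealGen _).zero_mem⟩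
    · rintro n y ⟨x, hx, hy⟩
      exact ⟨x, hx, (isTTIdeal_ttIdealGen _).shift_mem n y hy⟩
    · rintro T hT ⟨x₁, hx₁, h1⟩ ⟨x₂, hx₂, h2⟩
      refine ⟨x₁ ⊞ x₂, IsTTIdeal.biprod_mem hP hx₁ hx₂, ?_⟩
      have sub : ∀ (a b : K) (i : a ⟶ b) (r : b ⟶ a), i ≫ r = 𝟙 a →
          ttIdealGen ({F.obj a} : Set L) ⊆ ttIdealGen ({F.obj b} : Set L) := by
        intro a b i r hir
        refine ttIdealGen_le (isTTIdeal_ttIdealGen _) ?_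
        rintro _ rfl
        exact mem_ttIdealGen_singleton_of_retract (F.map i) (F.map r)
          (by rw [← F.map_comp, hir, F.map_id])
      exact (isTTIdeal_ttIdealGen _).cone_mem T hT
        (sub x₁ _ biprod.inl biprod.fst biprod.inl_fst h1)
        (sub x₂ _ biprod.inr biprod.snd biprod.inr_snd h2)
    · rintro y z ⟨x, hx, hz⟩ i r hir
      exact ⟨x, hx, (isTTIdeal_ttIdealGen _).retract_mem y z hz i r hir⟩
    · rintro y ⟨x, hx, hy⟩ z
      exact ⟨x, hx, (isTTIdeal_ttIdealGen _).tensor_mem y hy z⟩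
    · rintro y ⟨x, hx, hy⟩ z
      exact ⟨x, hx, (isTTIdeal_ttIdealGen _).tensor_mem' y hy z⟩
  apply Set.Subset.antisymm
  · refine ttIdealGen_le hRHS ?_
    rintro _ ⟨x, hx, rfl⟩
    exact ⟨x, hx, subset_ttIdealGen _ rfl⟩
  · rintro y ⟨x, hx, hy⟩
    exact key x hx hy
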